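/- Define ψ : Fin 3 × Fin 3 → ℂ by ψ(i,j) = (1/√3)·(1/2)·(1 + I·(−1)^{i+j}) for i,j ∈ {0,1}, ψ(2,2) = 1/√3, and ψ(i,j) = 0 otherwise (this is the two-qutrit maximally entangled state (1/√3)(|+⟩|+⟩ + i|−⟩|−⟩ + |2⟩|2⟩) expressed in the standard basis). Then ψ has exactly 5 nonzero coefficients, and for every permutation π of Fin 3 × Fin 3 the real matrix (i,j) ↦ |ψ(π(i,j))| does not have rank 1; consequently no incoherent unitary maps ψ to a product vector, i.e., ψ has nonzero genuine distributed coherence. -/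

import Mathlib

open Finset Matrix

lemma GDC_mul_ne5 {a b : ℕ} (ha : a ≤ 3) (hb : b ≤ 3) : a * b ≠ 5 := by
  interval_cases a <;> interval_cases b <;> omega

lemma GDC_card5_aux (u v : Fin 3 → ℝ)
    (h : (Finset.univ.filter fun q : Fin 3 × Fin 3 => u q.1 * v q.2 ≠ 0).card = 5) : False := by
  classical
  have h1 : (Finset.univ.filter fun q : Fin 3 × Fin 3 => u q.1 * v q.2 ≠ 0)
      = (Finset.univ.filter fun i => u i ≠ 0) ×ˢ (Finset.univ.filter fun j => v j ≠ 0) := by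
    ext q
    simp [mul_ne_zero_iff, Finset.mem_product]
  rw [h1, Finset.card_product] at h
  exact GDC_mul_ne5 (by simpa using Finset.card_filter_le Finset.univ fun i => u i ≠ 0)
    (by simpa using Finset.card_filter_le Finset.univ fun j => v j ≠ 0) h

lemma GDC_rank_one_factor (A : Matrix (Fin 3) (Fin 3) ℝ) (h : A.rank = 1) :
    ∃ u v : Fin 3 → ℝ, ∀ i j, A i j = u i * v j := by
  classical
  rw [Matrix.rank_eq_finrank_span_cols] at h
  obtain ⟨v, -, hv⟩ := finrank_eq_one_iff'.mp h
  choose c hc using fun j => hv ⟨Aᵀ j, Submodule.subset_span ⟨j, rfl⟩⟩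
  refine ⟨fun i => (v : Fin 3 → ℝ) i, c, fun i j => ?_⟩
  have := congrArg (fun w : Submodule.span ℝ (Set.range Aᵀ) => (w : Fin 3 → ℝ) i) (hc j)
  simpa [mul_comm, Matrix.transpose_apply] using this.symm

/-- The two-qutrit maximally entangled state
`(1/√3)(|+⟩|+⟩ + i|−⟩|−⟩ + |2⟩|2⟩)`, whose coefficients in the standard basis are
`ψ (i,j) = (1/√3)·(1/2)·(1 + I·(−1)^(i+j))` for `i,j ∈ {0,1}`, `ψ (2,2) = 1/√3` and
`0` otherwise, has exactly 5 nonzero coefficients, and for every permutation `π` of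
`Fin 3 × Fin 3` the matrix of moduli `(i,j) ↦ |ψ (π (i,j))|` does not have rank one;
consequently no incoherent unitary maps `ψ` to a product vector, i.e. `ψ` has
nonzero genuine distributed coherence. -/
theorem two_qutrit_max_entangled_has_GDC
    (ψ : Fin 3 × Fin 3 → ℂ)
    (hψ : ∀ q : Fin 3 × Fin 3,
      ψ q =
        if (q.1 : ℕ) < 2 ∧ (q.2 : ℕ) < 2 then
          (1 / (Real.sqrt 3 : ℂ)) * (1 / 2) *
            (1 + Complex.I * (-1 : ℂ) ^ ((q.1 : ℕ) + (q.2 : ℕ)))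
        else if q = (2, 2) then 1 / (Real.sqrt 3 : ℂ)
        else 0) :
    {q : Fin 3 × Fin 3 | ψ q ≠ 0}.ncard = 5 ∧
      (∀ π : Equiv.Perm (Fin 3 × Fin 3),
        (Matrix.of fun i j => ‖ψ (π (i, j))‖).rank ≠ 1) ∧
      ¬ ∃ (π : Equiv.Perm (Fin 3 × Fin 3)) (φ : Fin 3 × Fin 3 → ℝ)
          (a b : Fin 3 → ℂ),
          ∀ q : Fin 3 × Fin 3,
            Complex.exp ((φ q : ℂ) * Complex.I) * ψ (π q) = a q.1 * b q.2 := by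
  classical
  have hS : (Finset.univ.filter fun q : Fin 3 × Fin 3 => ψ q ≠ 0)
      = ({(0,0),(0,1),(1,0),(1,1),(2,2)} : Finset (Fin 3 × Fin 3)) := by
    have h3 : (Real.sqrt 3 : ℂ) ≠ 0 := by
      simpa [Complex.ofReal_ne_zero] using Real.sqrt_ne_zero'.mpr (by norm_num)
    have hp : (1 + Complex.I : ℂ) ≠ 0 := by simp [Complex.ext_iff]
    have hm : (1 + -Complex.I : ℂ) ≠ 0 := by simp [Complex.ext_iff]
    ext q
    fin_cases q <;> simp [hψ, Prod.ext_iff, h3, hp, hm, sub_eq_add_neg]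
  have hScard : (Finset.univ.filter fun q : Fin 3 × Fin 3 => ψ q ≠ 0).card = 5 := by
    rw [hS]; decide
  have hcardπ : ∀ π : Equiv.Perm (Fin 3 × Fin 3),
      (Finset.univ.filter fun q : Fin 3 × Fin 3 => ψ (π q) ≠ 0).card = 5 := by
    intro π
    rw [← hScard]
    exact Finset.card_equiv π (by simp)
  refine ⟨?_, ?_, ?_⟩
  · have h1 : {q : Fin 3 × Fin 3 | ψ q ≠ 0}
        = ↑(Finset.univ.filter fun q : Fin 3 × Fin 3 => ψ q ≠ 0) := by
      ext q; simp
    rw [h1, Set.ncard_coe_finset, hScard]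
  · intro π h
    obtain ⟨u, v, huv⟩ := GDC_rank_one_factor _ h
    apply GDC_card5_aux u v
    rw [← hcardπ π]
    congr 1
    ext q
    simp only [Finset.mem_filter, Finset.mem_univ, true_and]
    rw [← huv q.1 q.2]
    simp [AbsoluteValue.ne_zero_iff]
  · rintro ⟨π, φ, a, b, hab⟩
    apply GDC_card5_aux (fun i => ‖a i‖) (fun j => ‖b j‖)
    have habs : ∀ q : Fin 3 × Fin 3,
        ‖ψ (π q)‖ = ‖a q.1‖ * ‖b q.2‖ := by
      intro q
      have := congrArg norm (hab q)
      simpa [norm_mul, Complex.norm_exp_ofReal_mul_I] using this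
    rw [← hcardπ π]
    congr 1
    ext q
    simp only [Finset.mem_filter, Finset.mem_univ, true_and]
    rw [← habs q]
    simp [AbsoluteValue.ne_zero_iff]
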